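/- If P^{n*} = 0 in the iterative decomposition procedure, then P = Σ_{l=1}^{n*} α_l L^l with Σ_{l=1}^{n*} α_l = 1, α_l ∈ (0,1], and each L^l a deterministic 0-1 matrix with exactly one 1 per row. -/
import Mathlib


/-- The maximum of row `i` of the matrix `P`. -/
noncomputable def rowMax {I J : Type*} [Fintype J] [Nonempty J]
    (P : I → J → ℝ) (i : I) : ℝ :=
  Finset.univ.sup' Finset.univ_nonempty (P i)

open Classical in
/-- The first column index achieving the maximum of row `i` of `P`. -/
noncomputable def argmaxRow {I J : Type*} [Fintype J] [Nonempty J] [LinearOrder J]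
    (P : I → J → ℝ) (i : I) : J :=
  (Finset.univ.filter fun j => P i j = rowMax P i).min' (by
    obtain ⟨b, _, hb⟩ := Finset.exists_mem_eq_sup' (Finset.univ_nonempty) (P i)
    exact ⟨b, Finset.mem_filter.mpr ⟨Finset.mem_univ b, hb.symm⟩⟩)

/-- The greedy coefficient `α = min_i max_j P i j`. -/
noncomputable def alphaCoef {I J : Type*} [Fintype I] [Nonempty I] [Fintype J] [Nonempty J]
    (P : I → J → ℝ) : ℝ :=
  Finset.univ.inf' Finset.univ_nonempty (rowMax P)

/-- The 0-1 matrix with a `1` in row `i` exactly at the first column achieving the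
row maximum of `P`. -/
noncomputable def Lmat {I J : Type*} [Fintype J] [Nonempty J] [LinearOrder J]
    (P : I → J → ℝ) : I → J → ℝ :=
  fun i j => if j = argmaxRow P i then 1 else 0

/-- The iterative greedy decomposition procedure:
`P⁰ = P`, `P^{m+1} = P^m - α(P^m) • L(P^m)`. -/
noncomputable def iterP {I J : Type*} [Fintype I] [Nonempty I]
    [Fintype J] [Nonempty J] [LinearOrder J]
    (P : I → J → ℝ) : ℕ → I → J → ℝ
  | 0 => P
  | m + 1 => fun i j => iterP P m i j - alphaCoef (iterP P m) * Lmat (iterP P m) i j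

set_option linter.unusedSectionVars false

section Aux
variable {I J : Type*} [Fintype I] [Nonempty I] [Fintype J] [Nonempty J] [LinearOrder J]

lemma le_rowMax (Q : I → J → ℝ) (i : I) (j : J) : Q i j ≤ rowMax Q i :=
  Finset.le_sup' _ (Finset.mem_univ j)

lemma alpha_le_rowMax (Q : I → J → ℝ) (i : I) : alphaCoef Q ≤ rowMax Q i :=
  Finset.inf'_le _ (Finset.mem_univ i)

open Classical in
lemma Q_argmax (Q : I → J → ℝ) (i : I) : Q i (argmaxRow Q i) = rowMax Q i := by
  have h := Finset.min'_mem (Finset.univ.filter fun j => Q i j = rowMax Q i)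
    (by
      obtain ⟨b, _, hb⟩ := Finset.exists_mem_eq_sup' (Finset.univ_nonempty) (Q i)
      exact ⟨b, Finset.mem_filter.mpr ⟨Finset.mem_univ b, hb.symm⟩⟩)
  have := (Finset.mem_filter.mp h).2
  simpa [argmaxRow] using this

lemma Lmat_rowsum (Q : I → J → ℝ) (i : I) : ∑ j, Lmat Q i j = 1 := by
  simp [Lmat]

lemma iterP_telescope (P : I → J → ℝ) (m : ℕ) (i : I) (j : J) :
    iterP P m i j = P i j - ∑ l ∈ Finset.range m,
      alphaCoef (iterP P l) * Lmat (iterP P l) i j := by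
  induction m with
  | zero => simp [iterP]
  | succ m ih => simp only [iterP, Finset.sum_range_succ, ih]; ring

lemma iterP_nonneg (P : I → J → ℝ) (h0 : ∀ i j, 0 ≤ P i j) (m : ℕ) :
    ∀ i j, 0 ≤ iterP P m i j := by
  induction m with
  | zero => exact h0
  | succ m ih =>
    intro i j
    show 0 ≤ iterP P m i j - alphaCoef (iterP P m) * Lmat (iterP P m) i j
    unfold Lmat
    split
    · next h =>
      rw [h, mul_one, Q_argmax (iterP P m) i, sub_nonneg]
      exact alpha_le_rowMax _ i
    · simpa using ih i j

lemma iterP_rowsum (P : I → J → ℝ) (m : ℕ) (i : I) :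
    ∑ j, iterP P m i j = (∑ j, P i j) - ∑ l ∈ Finset.range m, alphaCoef (iterP P l) := by
  simp only [iterP_telescope, Finset.sum_sub_distrib]
  congr 1
  rw [Finset.sum_comm]
  refine Finset.sum_congr rfl fun l _ => ?_
  rw [← Finset.mul_sum, Lmat_rowsum, mul_one]

lemma alpha_nonneg (Q : I → J → ℝ) (hQ : ∀ i j, 0 ≤ Q i j) : 0 ≤ alphaCoef Q := by
  have i : I := Classical.arbitrary I
  have j : J := Classical.arbitrary J
  refine Finset.le_inf' _ _ fun i _ => le_trans (hQ i j) (le_rowMax Q i j)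

end Aux

/-- If the iterative decomposition procedure terminates at step `n*`
(i.e. `P^{n*} = 0` and `P^l ≠ 0` for `l < n*`), then
`P = ∑_{l=1}^{n*} α_l • L^l` with `∑ α_l = 1`, each `α_l ∈ (0,1]`, and each `L^l`
a deterministic 0-1 matrix with exactly one `1` per row. -/
theorem iterP_terminates_gives_decomposition
    {I J : Type*} [Fintype I] [Nonempty I] [Fintype J] [Nonempty J] [LinearOrder J]
    (P : I → J → ℝ)
    (h0 : ∀ i j, 0 ≤ P i j) (h1 : ∀ i j, P i j ≤ 1)
    (hrow : ∀ i, ∑ j, P i j = 1)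
    (n : ℕ)
    (hzero : ∀ i j, iterP P n i j = 0)
    (hne : ∀ l < n, ¬ (∀ i j, iterP P l i j = 0)) :
    (∀ i j, P i j =
        ∑ l ∈ Finset.range n, alphaCoef (iterP P l) * Lmat (iterP P l) i j) ∧
    (∑ l ∈ Finset.range n, alphaCoef (iterP P l) = 1) ∧
    (∀ l ∈ Finset.range n,
        0 < alphaCoef (iterP P l) ∧ alphaCoef (iterP P l) ≤ 1) ∧
    (∀ l ∈ Finset.range n,
        (∀ i j, Lmat (iterP P l) i j = 0 ∨ Lmat (iterP P l) i j = 1) ∧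
        (∀ i, ∑ j, Lmat (iterP P l) i j = 1)) := by

  have hnn : ∀ m i j, 0 ≤ iterP P m i j := fun m => iterP_nonneg P h0 m
  have hαnn : ∀ l, 0 ≤ alphaCoef (iterP P l) := fun l => alpha_nonneg _ (hnn l)
  obtain ⟨i0⟩ := (inferInstance : Nonempty I)
  have hsum1 : ∑ l ∈ Finset.range n, alphaCoef (iterP P l) = 1 := by
    have h := iterP_rowsum P n i0
    rw [hrow i0] at h
    simp only [hzero, Finset.sum_const_zero] at h
    linarith
  have hpartial : ∀ m, m ≤ n → ∑ l ∈ Finset.range m, alphaCoef (iterP P l) ≤ 1 := by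
    intro m hm
    rw [← hsum1]
    exact Finset.sum_le_sum_of_subset_of_nonneg
      (Finset.range_subset_range.mpr hm) (fun l _ _ => hαnn l)
  have hrowsum_pos : ∀ l < n, ∀ i, 0 < ∑ j, iterP P l i j := by
    intro l hl i
    have hle := iterP_rowsum P l i
    rw [hrow i] at hle
    rcases lt_or_eq_of_le (hpartial l hl.le) with h | h
    · linarith
    · exfalso
      apply hne l hl
      intro i j
      have hz : ∑ j, iterP P l i j = 0 := by
        rw [iterP_rowsum P l i, hrow i, h]; ring
      exact (Finset.sum_eq_zero_iff_of_nonneg (fun j _ => hnn l i j)).mp hz j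
        (Finset.mem_univ j)
  refine ⟨?_, hsum1, ?_, ?_⟩
  · intro i j
    have h := iterP_telescope P n i j
    rw [hzero] at h
    linarith
  · intro l hl
    rw [Finset.mem_range] at hl
    constructor
    · rw [alphaCoef]
      rw [Finset.lt_inf'_iff]
      intro i _
      by_contra hmax
      push_neg at hmax
      have hs : ∑ j, iterP P l i j ≤ 0 :=
        Finset.sum_nonpos fun j _ => le_trans (le_rowMax _ i j) hmax
      exact absurd hs (not_le.mpr (hrowsum_pos l hl i))
    · have h1' : alphaCoef (iterP P l) ≤ rowMax (iterP P l) i0 := alpha_le_rowMax _ i0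
      have h2 : rowMax (iterP P l) i0 ≤ ∑ j, iterP P l i0 j := by
        rw [← Q_argmax (iterP P l) i0]
        exact Finset.single_le_sum (fun j _ => hnn l i0 j) (Finset.mem_univ _)
      have h3 := iterP_rowsum P l i0
      rw [hrow i0] at h3
      have h4 : 0 ≤ ∑ k ∈ Finset.range l, alphaCoef (iterP P k) :=
        Finset.sum_nonneg fun k _ => hαnn k
      linarith
  · intro l _
    refine ⟨fun i j => ?_, fun i => Lmat_rowsum _ i⟩
    unfold Lmat
    split <;> simp
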